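/- For any real q ≥ 2 and complex numbers α₁, α₂, there exists a constant C depending only on q such that | |α₁|^{q-3} α₁² - |α₂|^{q-3} α₂² | ≤ C |α₁ - α₂| (|α₁| + |α₂|)^{q-2}, where |α|^{q-3} α² is interpreted as 0 when α = 0. -/

import Mathlib

open Real

private lemma bern_hi' {s a b : ℝ} (hs : 1 ≤ s) (hb : 0 < b) (hba : b ≤ a) :
    a ^ s - b ^ s ≤ s * a ^ (s - 1) * (a - b) := by
  have ha : 0 < a := hb.trans_le hba
  have hz : (-1 : ℝ) ≤ b / a - 1 := by
    have : 0 < b / a := div_pos hb ha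
    linarith
  have hB := one_add_mul_self_le_rpow_one_add hz hs
  rw [show 1 + (b / a - 1) = b / a by ring, div_rpow hb.le ha.le] at hB
  have has : 0 < a ^ s := rpow_pos_of_pos ha s
  have h1 : a ^ (s - 1) = a ^ s / a := by
    rw [rpow_sub ha, rpow_one]
  rw [h1]
  have := mul_le_mul_of_nonneg_left hB has.le
  rw [mul_div_cancel₀ _ has.ne'] at this
  have h2 : a ^ s * (1 + s * (b / a - 1)) = a ^ s + s * (a ^ s / a) * (b - a) := by
    field_simp
  rw [h2] at this
  linarith

private lemma bern_lo' {s a b : ℝ} (hs0 : 0 ≤ s) (hs1 : s ≤ 1) (hb : 0 < b) (hba : b ≤ a) :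
    a ^ s - b ^ s ≤ s * b ^ (s - 1) * (a - b) := by
  have ha : 0 < a := hb.trans_le hba
  have hz : (-1 : ℝ) ≤ a / b - 1 := by
    have : 0 < a / b := div_pos ha hb
    linarith
  have hB := rpow_one_add_le_one_add_mul_self hz hs0 hs1
  rw [show 1 + (a / b - 1) = a / b by ring, div_rpow ha.le hb.le] at hB
  have hbs : 0 < b ^ s := rpow_pos_of_pos hb s
  have h1 : b ^ (s - 1) = b ^ s / b := by
    rw [rpow_sub hb, rpow_one]
  rw [h1]
  have := mul_le_mul_of_nonneg_left hB hbs.le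
  rw [mul_div_cancel₀ _ hbs.ne'] at this
  have h2 : b ^ s * (1 + s * (a / b - 1)) = b ^ s + s * (b ^ s / b) * (a - b) := by
    field_simp
  rw [h2] at this
  linarith

private lemma key2' {q a b : ℝ} (hq : 2 ≤ q) (hb : 0 < b) (hba : b ≤ a) :
    |a ^ (q - 3) - b ^ (q - 3)| * b ^ 2 ≤ (q + 1) * (a - b) * a ^ (q - 2) := by
  have ha : 0 < a := hb.trans_le hba
  have hab : 0 ≤ a - b := by linarith
  have haq : 0 ≤ a ^ (q - 2) := (rpow_pos_of_pos ha _).le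
  rcases le_or_gt 3 q with h3 | h3
  · have hp : 0 ≤ q - 3 := by linarith
    have hmono : b ^ (q - 3) ≤ a ^ (q - 3) := rpow_le_rpow hb.le hba hp
    rw [abs_of_nonneg (by linarith)]
    rcases le_or_gt 1 (q - 3) with h1 | h1
    · have hB := bern_hi' h1 hb hba
      have h2 : a ^ (q - 3 - 1) * b ^ 2 ≤ a ^ (q - 2) := by
        have hb2 : b ^ 2 ≤ a ^ 2 := by nlinarith
        calc a ^ (q - 3 - 1) * b ^ 2 ≤ a ^ (q - 3 - 1) * a ^ 2 :=
              mul_le_mul_of_nonneg_left hb2 (rpow_pos_of_pos ha _).le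
          _ = a ^ (q - 2) := by rw [← rpow_two, ← rpow_add ha]; ring_nf
      have s1 : (a ^ (q-3) - b ^ (q-3)) * b ^ 2 ≤ ((q-3) * a ^ (q-3-1) * (a-b)) * b ^ 2 :=
        mul_le_mul_of_nonneg_right hB (sq_nonneg b)
      have s3 : ((q-3) * (a-b)) * (a ^ (q-3-1) * b ^ 2) ≤ ((q-3) * (a-b)) * a ^ (q-2) :=
        mul_le_mul_of_nonneg_left h2 (by nlinarith)
      have s4 : ((q-3) * (a-b)) * a ^ (q-2) ≤ ((q+1) * (a-b)) * a ^ (q-2) :=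
        mul_le_mul_of_nonneg_right (mul_le_mul_of_nonneg_right (by linarith) hab) haq
      calc (a ^ (q-3) - b ^ (q-3)) * b ^ 2 ≤ ((q-3) * (a-b)) * (a ^ (q-3-1) * b ^ 2) := by
            rw [show ((q-3) * (a-b)) * (a ^ (q-3-1) * b ^ 2) = ((q-3) * a ^ (q-3-1) * (a-b)) * b ^ 2 by ring]
            exact s1
        _ ≤ ((q-3) * (a-b)) * a ^ (q-2) := s3
        _ ≤ ((q+1) * (a-b)) * a ^ (q-2) := s4
        _ = (q+1) * (a-b) * a ^ (q-2) := by ring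
    · have hB := bern_lo' hp h1.le hb hba
      have h2 : b ^ (q - 3 - 1) * b ^ 2 ≤ a ^ (q - 2) := by
        have heq : b ^ (q - 3 - 1) * b ^ 2 = b ^ (q - 2) := by
          rw [← rpow_two, ← rpow_add hb]; ring_nf
        rw [heq]
        exact rpow_le_rpow hb.le hba (by linarith)
      have s1 : (a ^ (q-3) - b ^ (q-3)) * b ^ 2 ≤ ((q-3) * b ^ (q-3-1) * (a-b)) * b ^ 2 :=
        mul_le_mul_of_nonneg_right hB (sq_nonneg b)
      have s3 : ((q-3) * (a-b)) * (b ^ (q-3-1) * b ^ 2) ≤ ((q-3) * (a-b)) * a ^ (q-2) :=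
        mul_le_mul_of_nonneg_left h2 (by nlinarith)
      have s4 : ((q-3) * (a-b)) * a ^ (q-2) ≤ ((q+1) * (a-b)) * a ^ (q-2) :=
        mul_le_mul_of_nonneg_right (mul_le_mul_of_nonneg_right (by linarith) hab) haq
      calc (a ^ (q-3) - b ^ (q-3)) * b ^ 2 ≤ ((q-3) * (a-b)) * (b ^ (q-3-1) * b ^ 2) := by
            rw [show ((q-3) * (a-b)) * (b ^ (q-3-1) * b ^ 2) = ((q-3) * b ^ (q-3-1) * (a-b)) * b ^ 2 by ring]
            exact s1
        _ ≤ ((q-3) * (a-b)) * a ^ (q-2) := s3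
        _ ≤ ((q+1) * (a-b)) * a ^ (q-2) := s4
        _ = (q+1) * (a-b) * a ^ (q-2) := by ring
  · set r := 3 - q with hr
    have hr0 : 0 < r := by linarith
    have hr1 : r ≤ 1 := by linarith
    have har : 0 < a ^ r := rpow_pos_of_pos ha r
    have hbr : 0 < b ^ r := rpow_pos_of_pos hb r
    have hmono : a ^ (q - 3) ≤ b ^ (q - 3) := by
      rw [show q - 3 = -r by ring, rpow_neg ha.le, rpow_neg hb.le]
      exact inv_anti₀ hbr (rpow_le_rpow hb.le hba hr0.le)
    rw [abs_of_nonpos (by linarith), neg_sub]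
    have hdiff : b ^ (q - 3) - a ^ (q - 3) = (a ^ r - b ^ r) / (a ^ r * b ^ r) := by
      rw [show q - 3 = -r by ring, rpow_neg ha.le, rpow_neg hb.le]
      field_simp
    have hB := bern_lo' hr0.le hr1 hb hba
    have hbb : b ^ (r - 1) * b ^ 2 = b * b ^ r := by
      rw [← rpow_two, ← rpow_add hb, show r - 1 + 2 = 1 + r by ring, rpow_add hb, rpow_one]
    have hstep : (b ^ (q - 3) - a ^ (q - 3)) * b ^ 2 ≤ r * (a - b) * (b / a ^ r) := by
      rw [hdiff, div_mul_eq_mul_div, div_le_iff₀ (by positivity)]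
      have expand : r * (a - b) * (b / a ^ r) * (a ^ r * b ^ r) = r * b ^ (r-1) * (a - b) * b ^ 2 := by
        have h0 : b / a ^ r * (a ^ r * b ^ r) = b * b ^ r := by field_simp
        calc r * (a - b) * (b / a ^ r) * (a ^ r * b ^ r)
            = r * (a - b) * (b / a ^ r * (a ^ r * b ^ r)) := by ring
          _ = r * (a - b) * (b * b ^ r) := by rw [h0]
          _ = r * b ^ (r-1) * (a - b) * b ^ 2 := by linear_combination (-(r * (a - b))) * hbb
      rw [expand]
      exact mul_le_mul_of_nonneg_right hB (sq_nonneg b)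
    have hfin : b / a ^ r ≤ a ^ (q - 2) := by
      rw [div_le_iff₀ har]
      calc b ≤ a := hba
        _ = a ^ (q - 2) * a ^ r := by
            rw [← rpow_add ha, show q - 2 + r = 1 by ring, rpow_one]
    have h1 : r * (a - b) * (b / a ^ r) ≤ r * (a - b) * a ^ (q - 2) :=
      mul_le_mul_of_nonneg_left hfin (by positivity)
    have h2 : r * (a - b) * a ^ (q - 2) ≤ (q + 1) * (a - b) * a ^ (q - 2) :=
      mul_le_mul_of_nonneg_right (mul_le_mul_of_nonneg_right (by linarith) hab) haq
    exact hstep.trans (h1.trans h2)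

private lemma key1' {q a b : ℝ} (hq : 2 ≤ q) (hb : 0 < b) (hba : b ≤ a) :
    a ^ (q - 3) ≤ 2 * (a + b) ^ (q - 3) := by
  have ha : 0 < a := hb.trans_le hba
  have hab : 0 < a + b := by linarith
  rcases le_or_gt 3 q with h3 | h3
  · calc a ^ (q - 3) ≤ (a + b) ^ (q - 3) := rpow_le_rpow ha.le (by linarith) (by linarith)
      _ ≤ 2 * (a + b) ^ (q - 3) := by nlinarith [rpow_pos_of_pos hab (q - 3)]
  · set r := 3 - q with hr
    have hr0 : 0 < r := by linarith
    have hr1 : r ≤ 1 := by linarith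
    have h2r : (a + b) ^ r ≤ 2 ^ r * a ^ r := by
      rw [← mul_rpow (by norm_num) ha.le]
      exact rpow_le_rpow (by positivity) (by linarith) hr0.le
    have h2r' : (2:ℝ) ^ r ≤ 2 := by
      calc (2:ℝ) ^ r ≤ 2 ^ (1:ℝ) := rpow_le_rpow_of_exponent_le one_le_two hr1
        _ = 2 := rpow_one 2
    have hmain : (a + b) ^ r ≤ 2 * a ^ r :=
      h2r.trans (mul_le_mul_of_nonneg_right h2r' (rpow_nonneg ha.le r))
    rw [show q - 3 = -r by ring, rpow_neg ha.le, rpow_neg hab.le]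
    calc (a ^ r)⁻¹ ≤ ((a + b) ^ r / 2)⁻¹ :=
          inv_anti₀ (by positivity) (by linarith)
      _ = 2 * ((a + b) ^ r)⁻¹ := by rw [inv_div]; rw [div_eq_mul_inv]

private lemma main_est' {q : ℝ} (hq : 2 ≤ q) (α₁ α₂ : ℂ) (h : ‖α₂‖ ≤ ‖α₁‖) :
    ‖
          ((if α₁ = 0 then 0 else ((‖α₁‖ ^ (q - 3) : ℝ) : ℂ) * α₁ ^ 2) -
           (if α₂ = 0 then 0 else ((‖α₂‖ ^ (q - 3) : ℝ) : ℂ) * α₂ ^ 2))‖ ≤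
        (q + 3) * ‖(α₁ - α₂)‖ * (‖α₁‖ + ‖α₂‖) ^ (q - 2) := by
  by_cases h1 : α₁ = 0
  · have h2 : α₂ = 0 := by
      rw [h1, norm_zero] at h
      exact norm_eq_zero.mp (le_antisymm h (norm_nonneg _))
    subst h1; subst h2
    simp
  by_cases h2 : α₂ = 0
  · subst h2
    rw [if_neg h1, if_pos rfl, sub_zero, sub_zero, norm_zero, add_zero,
      norm_mul, norm_pow, Complex.norm_real, Real.norm_eq_abs,
      abs_of_nonneg (rpow_nonneg (norm_nonneg _) _)]
    set a := ‖α₁‖ with ha'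
    have ha : 0 < a := norm_pos_iff.mpr h1
    have e1 : a ^ (q - 3) * a ^ 2 = a * a ^ (q - 2) := by
      rw [← rpow_two, ← rpow_add ha]
      nth_rewrite 2 [show a = a ^ (1:ℝ) from (rpow_one a).symm]
      rw [← rpow_add ha]
      ring_nf
    rw [e1]
    have hpos : 0 < a * a ^ (q - 2) := by positivity
    nlinarith [hpos]
  · rw [if_neg h1, if_neg h2]
    set a := ‖α₁‖ with ha'
    set b := ‖α₂‖ with hb'
    have ha : 0 < a := norm_pos_iff.mpr h1
    have hb : 0 < b := norm_pos_iff.mpr h2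
    have hsab : 0 < a + b := by linarith
    set d := ‖(α₁ - α₂)‖ with hd'
    have hd : 0 ≤ d := norm_nonneg _
    have decomp : ((a ^ (q-3) : ℝ) : ℂ) * α₁ ^ 2 - ((b ^ (q-3) : ℝ) : ℂ) * α₂ ^ 2
        = ((a ^ (q-3) : ℝ) : ℂ) * (α₁ ^ 2 - α₂ ^ 2)
          + (((a ^ (q-3) : ℝ) : ℂ) - ((b ^ (q-3) : ℝ) : ℂ)) * α₂ ^ 2 := by ring
    rw [decomp]
    refine le_trans (norm_add_le _ _) ?_
    rw [norm_mul, norm_mul, norm_pow]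
    have e1 : ‖((a ^ (q-3) : ℝ) : ℂ)‖ = a ^ (q-3) := by
      rw [Complex.norm_real, Real.norm_eq_abs, abs_of_nonneg (rpow_nonneg ha.le _)]
    have e2 : ‖(((a ^ (q-3) : ℝ) : ℂ) - ((b ^ (q-3) : ℝ) : ℂ))‖ = |a ^ (q-3) - b ^ (q-3)| := by
      rw [← Complex.ofReal_sub, Complex.norm_real, Real.norm_eq_abs]
    rw [e1, e2]
    have e3 : ‖(α₁ ^ 2 - α₂ ^ 2)‖ ≤ d * (a + b) := by
      rw [show α₁ ^ 2 - α₂ ^ 2 = (α₁ - α₂) * (α₁ + α₂) by ring, norm_mul]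
      exact mul_le_mul_of_nonneg_left (norm_add_le _ _) (norm_nonneg _)
    have habd : a - b ≤ d := by
      have := norm_sub_norm_le α₁ α₂
      exact this
    have hpow : (a + b) ^ (q-3) * (a + b) = (a + b) ^ (q-2) := by
      rw [← rpow_add_one hsab.ne']
      ring_nf
    have t1 : a ^ (q-3) * ‖(α₁ ^ 2 - α₂ ^ 2)‖ ≤ 2 * d * (a + b) ^ (q-2) := by
      calc a ^ (q-3) * ‖(α₁ ^ 2 - α₂ ^ 2)‖ ≤ a ^ (q-3) * (d * (a + b)) :=
            mul_le_mul_of_nonneg_left e3 (rpow_nonneg ha.le _)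
        _ ≤ (2 * (a + b) ^ (q-3)) * (d * (a + b)) :=
            mul_le_mul_of_nonneg_right (key1' hq hb h) (by positivity)
        _ = 2 * d * ((a + b) ^ (q-3) * (a + b)) := by ring
        _ = 2 * d * (a + b) ^ (q-2) := by rw [hpow]
    have t2 : |a ^ (q-3) - b ^ (q-3)| * b ^ 2 ≤ (q + 1) * d * (a + b) ^ (q-2) := by
      refine le_trans (key2' hq hb h) ?_
      have hA : a ^ (q-2) ≤ (a + b) ^ (q-2) := rpow_le_rpow ha.le (by linarith) (by linarith)
      have hm : (a - b) * a ^ (q-2) ≤ d * (a + b) ^ (q-2) :=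
        mul_le_mul habd hA (rpow_nonneg ha.le _) hd
      calc (q + 1) * (a - b) * a ^ (q-2) = (q + 1) * ((a - b) * a ^ (q-2)) := by ring
        _ ≤ (q + 1) * (d * (a + b) ^ (q-2)) := mul_le_mul_of_nonneg_left hm (by linarith)
        _ = (q + 1) * d * (a + b) ^ (q-2) := by ring
    calc a ^ (q-3) * ‖(α₁ ^ 2 - α₂ ^ 2)‖ + |a ^ (q-3) - b ^ (q-3)| * b ^ 2
        ≤ 2 * d * (a + b) ^ (q-2) + (q + 1) * d * (a + b) ^ (q-2) := add_le_add t1 t2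
      _ = (q + 3) * d * (a + b) ^ (q-2) := by ring

theorem stmt_1 (q : ℝ) (hq : 2 ≤ q) :
    ∃ C : ℝ, 0 < C ∧ ∀ α₁ α₂ : ℂ,
      ‖
          ((if α₁ = 0 then 0 else ((‖α₁‖ ^ (q - 3) : ℝ) : ℂ) * α₁ ^ 2) -
           (if α₂ = 0 then 0 else ((‖α₂‖ ^ (q - 3) : ℝ) : ℂ) * α₂ ^ 2))‖ ≤
        C * ‖(α₁ - α₂)‖ * (‖α₁‖ + ‖α₂‖) ^ (q - 2) := by
  refine ⟨q + 3, by linarith, fun α₁ α₂ => ?_⟩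
  rcases le_total (‖α₂‖) (‖α₁‖) with h | h
  · exact main_est' hq α₁ α₂ h
  · have e := main_est' hq α₂ α₁ h
    calc ‖
          ((if α₁ = 0 then 0 else ((‖α₁‖ ^ (q - 3) : ℝ) : ℂ) * α₁ ^ 2) -
           (if α₂ = 0 then 0 else ((‖α₂‖ ^ (q - 3) : ℝ) : ℂ) * α₂ ^ 2))‖
        = ‖
          ((if α₂ = 0 then 0 else ((‖α₂‖ ^ (q - 3) : ℝ) : ℂ) * α₂ ^ 2) -
           (if α₁ = 0 then 0 else ((‖α₁‖ ^ (q - 3) : ℝ) : ℂ) * α₁ ^ 2))‖ :=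
          norm_sub_rev _ _
      _ ≤ (q + 3) * ‖(α₂ - α₁)‖ * (‖α₂‖ + ‖α₁‖) ^ (q - 2) := e
      _ = (q + 3) * ‖(α₁ - α₂)‖ * (‖α₁‖ + ‖α₂‖) ^ (q - 2) := by
          rw [norm_sub_rev, add_comm (‖α₂‖)]
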